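/- Let X be a Polish space and E an equivalence relation on X such that the E-saturation of every open subset of X is open. Then the following are equivalent: (1) every E-class is a Gδ subset of X; (2) E is a Gδ subset of X × X; (3) the quotient space X/E with the quotient topology is T₀. -/

import Mathlib

open Set

private lemma isGδ_preimage {X Y : Type*} [TopologicalSpace X] [TopologicalSpace Y]
    {s : Set Y} (hs : IsGδ s) {f : X → Y} (hf : Continuous f) : IsGδ (f ⁻¹' s) := by
  obtain ⟨T, hTo, hTc, rfl⟩ := hs
  refine ⟨(fun t => f ⁻¹' t) '' T, ?_, hTc.image _, ?_⟩
  · rintro t ⟨u, hu, rfl⟩; exact (hTo u hu).preimage hf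
  · simp [sInter_image, preimage_iInter]

/-- `(1) → (3)`: if all classes are Gδ then the quotient is T₀. -/
private lemma aux13 {X : Type*} [TopologicalSpace X] [PolishSpace X] (S : Setoid X)
    (hsat : ∀ U : Set X, IsOpen U → IsOpen {y : X | ∃ x ∈ U, S.r y x})
    (h1 : ∀ x : X, IsGδ {y : X | S.r y x}) : T0Space (Quotient S) := by
  refine (t0Space_iff_inseparable _).mpr ?_
  intro a b hab
  obtain ⟨x, rfl⟩ := Quotient.exists_rep a
  obtain ⟨y, rfl⟩ := Quotient.exists_rep b
  -- from inseparability, each open set meets the class of x iff it meets the class of y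
  have key : ∀ U : Set X, IsOpen U → ((∃ u ∈ U, S.r x u) ↔ (∃ u ∈ U, S.r y u)) := by
    intro U hU
    set V : Set X := {z : X | ∃ u ∈ U, S.r z u} with hV
    have hVsat : Quotient.mk S ⁻¹' (Quotient.mk S '' V) = V := by
      ext z
      constructor
      · rintro ⟨w, ⟨u, hu, hw⟩, hwz⟩
        exact ⟨u, hu, S.iseqv.trans (S.iseqv.symm (Quotient.exact hwz)) hw⟩
      · intro hz; exact mem_image_of_mem _ hz
    have hVopen : IsOpen (Quotient.mk S '' V) := by
      rw [isOpen_coinduced (f := Quotient.mk S), hVsat]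
      exact hsat U hU
    have := (inseparable_iff_forall_isOpen.mp hab) _ hVopen
    constructor
    · intro hx
      have h' : y ∈ Quotient.mk S ⁻¹' (Quotient.mk S '' V) :=
        this.mp (mem_image_of_mem _ hx)
      rwa [hVsat] at h'
    · intro hy
      have h' : x ∈ Quotient.mk S ⁻¹' (Quotient.mk S '' V) :=
        this.mpr (mem_image_of_mem _ hy)
      rwa [hVsat] at h'
  -- hence the closures of the two classes coincide
  have hcl : closure {z : X | S.r z x} = closure {z : X | S.r z y} := by
    ext z
    simp only [mem_closure_iff]
    constructor
    · intro h o ho hz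
      obtain ⟨u, hu1, hu2⟩ := (key o ho).mp
        (by obtain ⟨w, hw1, hw2⟩ := h o ho hz; exact ⟨w, hw1, S.iseqv.symm hw2⟩)
      exact ⟨u, hu1, S.iseqv.symm hu2⟩
    · intro h o ho hz
      obtain ⟨u, hu1, hu2⟩ := (key o ho).mpr
        (by obtain ⟨w, hw1, hw2⟩ := h o ho hz; exact ⟨w, hw1, S.iseqv.symm hw2⟩)
      exact ⟨u, hu1, S.iseqv.symm hu2⟩
  -- Baire category argument in the closed set C
  set C : Set X := closure {z : X | S.r z x} with hC
  have hCc : IsClosed C := isClosed_closure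
  letI : PolishSpace C := hCc.polishSpace
  letI := TopologicalSpace.upgradeIsCompletelyMetrizable C
  have hxC : x ∈ C := subset_closure (S.iseqv.refl x)
  haveI : Nonempty C := ⟨⟨x, hxC⟩⟩
  set s : Set C := Subtype.val ⁻¹' {z : X | S.r z x} with hs
  set t : Set C := Subtype.val ⁻¹' {z : X | S.r z y} with ht
  have hsub_x : {z : X | S.r z x} ⊆ C := subset_closure
  have hsub_y : {z : X | S.r z y} ⊆ C := hcl ▸ subset_closure
  have hdense : ∀ (A : Set X), A ⊆ C → closure A = C → Dense (Subtype.val ⁻¹' A : Set C) := by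
    intro A hAC hAcl
    rw [dense_iff_inter_open]
    rintro U hU ⟨⟨c, hcC⟩, hcU⟩
    obtain ⟨V, hV, rfl⟩ := isOpen_induced_iff.mp hU
    have hcV : c ∈ V := hcU
    have : (V ∩ A).Nonempty := by
      have : c ∈ closure A := hAcl ▸ hcC
      exact mem_closure_iff.mp this V hV hcV
    obtain ⟨w, hwV, hwA⟩ := this
    exact ⟨⟨w, hAC hwA⟩, hwV, hwA⟩
  have hds : Dense s := hdense _ hsub_x rfl
  have hdt : Dense t := hdense _ hsub_y (by rw [← hcl])
  have hgs : IsGδ s := isGδ_preimage (h1 x) continuous_subtype_val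
  have hgt : IsGδ t := isGδ_preimage (h1 y) continuous_subtype_val
  obtain ⟨⟨z, hzC⟩, hzs, hzt⟩ := (Dense.inter_of_Gδ hgs hgt hds hdt).nonempty
  exact Quotient.sound (S.iseqv.trans (S.iseqv.symm hzs) hzt)

/-- `(3) → (2)`: if the quotient is T₀ then the relation is Gδ. -/
private lemma aux32 {X : Type*} [TopologicalSpace X] [PolishSpace X] (S : Setoid X)
    (hsat : ∀ U : Set X, IsOpen U → IsOpen {y : X | ∃ x ∈ U, S.r y x})
    (h3 : T0Space (Quotient S)) : IsGδ {p : X × X | S.r p.1 p.2} := by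
  obtain ⟨b, hbc, -, hb⟩ := TopologicalSpace.exists_countable_basis X
  have heq : {p : X × X | S.r p.1 p.2} =
      ⋂ B ∈ b, {p : X × X |
        (p.1 ∈ {z : X | ∃ u ∈ B, S.r z u}) ↔ (p.2 ∈ {z : X | ∃ u ∈ B, S.r z u})} := by
    ext ⟨p1, p2⟩
    simp only [mem_iInter, mem_setOf_eq]
    constructor
    · intro hp B _
      constructor
      · rintro ⟨u, hu, h⟩; exact ⟨u, hu, S.iseqv.trans (S.iseqv.symm hp) h⟩
      · rintro ⟨u, hu, h⟩; exact ⟨u, hu, S.iseqv.trans hp h⟩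
    · intro hp
      have hins : Inseparable (Quotient.mk S p1) (Quotient.mk S p2) := by
        rw [inseparable_iff_forall_isOpen]
        intro o ho
        have hVopen : IsOpen (Quotient.mk S ⁻¹' o) := ho.preimage continuous_quotient_mk'
        have main : ∀ z w : X, (∀ B ∈ b,
            ((∃ u ∈ B, S.r z u) ↔ (∃ u ∈ B, S.r w u))) →
            z ∈ Quotient.mk S ⁻¹' o → w ∈ Quotient.mk S ⁻¹' o := by
          intro z w hzw hz
          obtain ⟨B, hBb, hzB, hBV⟩ := hb.exists_subset_of_mem_open hz hVopen
          obtain ⟨u, hu, hwu⟩ := (hzw B hBb).mp ⟨z, hzB, S.iseqv.refl z⟩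
          have : Quotient.mk S w = Quotient.mk S u := Quotient.sound hwu
          have hu' : u ∈ Quotient.mk S ⁻¹' o := hBV hu
          simpa [mem_preimage, this] using hu'
        constructor
        · exact fun h => main p1 p2 hp h
        · exact fun h => main p2 p1 (fun B hB => (hp B hB).symm) h
      exact Quotient.exact hins.eq
  rw [heq]
  letI := TopologicalSpace.upgradeIsCompletelyMetrizable (X × X)
  refine IsGδ.biInter hbc ?_
  intro B hB
  have hAopen : IsOpen {z : X | ∃ u ∈ B, S.r z u} := hsat B (hb.isOpen hB)
  set A : Set X := {z : X | ∃ u ∈ B, S.r z u}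
  have : {p : X × X | (p.1 ∈ A) ↔ (p.2 ∈ A)} = (A ×ˢ A) ∪ (Aᶜ ×ˢ Aᶜ) := by
    ext ⟨p1, p2⟩
    by_cases h1 : p1 ∈ A <;> by_cases h2 : p2 ∈ A <;>
      simp [mem_prod, h1, h2]
  rw [this]
  exact ((hAopen.prod hAopen).isGδ).union
    ((hAopen.isClosed_compl.prod hAopen.isClosed_compl).isGδ)

/-- Let `X` be Polish and `S` an equivalence relation on `X` whose saturations of open
sets are open. The following are equivalent: every class is Gδ; the relation is Gδ in
`X × X`; the quotient topology is T₀. -/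
theorem gdelta_orbits_tfae {X : Type*} [TopologicalSpace X] [PolishSpace X]
    (S : Setoid X)
    (hsat : ∀ U : Set X, IsOpen U → IsOpen {y : X | ∃ x ∈ U, S.r y x}) :
    ((∀ x : X, IsGδ {y : X | S.r y x}) ↔ IsGδ {p : X × X | S.r p.1 p.2}) ∧
    ((∀ x : X, IsGδ {y : X | S.r y x}) ↔ T0Space (Quotient S)) := by
  have h21 : IsGδ {p : X × X | S.r p.1 p.2} → ∀ x : X, IsGδ {y : X | S.r y x} := by
    intro h2 x
    have : {y : X | S.r y x} = (fun y : X => (y, x)) ⁻¹' {p : X × X | S.r p.1 p.2} := rfl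
    rw [this]
    exact isGδ_preimage h2 (continuous_id.prodMk continuous_const)
  refine ⟨⟨fun h1 => aux32 S hsat (aux13 S hsat h1), h21⟩,
    ⟨fun h1 => aux13 S hsat h1, fun h3 => h21 (aux32 S hsat h3)⟩⟩
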